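/- arXiv:1803.02535 — 3 statements merged into one kernel-verified Lean document; each statement's English description precedes it below -/
import Mathlib

section
/- (Theorem 2.1) With notation as in the setup, let S ⊆ {1,…,n} have cardinality ε. Then in ℂ[Γ]: A^0_{Φ_S} = (1/2)·T − (ε/n)·(1 − ρ)·T + (ε/(h n²))·(1 − ρ)·Σ_{g∈G} Σ_{x∈H} g x g⁻¹ + (1/(h n²))·(1 − ρ)·Σ_{g∈G} Σ_{i,j∈S, i≠j} Σ_{x∈H} g σ_i x σ_j⁻¹ g⁻¹. -/
open MonoidAlgebra Finset

noncomputable section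

/-- `Γ = G × ℤ/2ℤ` (written multiplicatively). -/
abbrev Gam (G : Type*) := G × Multiplicative (ZMod 2)

/-- The element `ρ = (1,1) ∈ Γ` ("complex conjugation"). -/
def rhoEl (G : Type*) [Group G] : Gam G := (1, Multiplicative.ofAdd (1 : ZMod 2))

/-- Embedding of `g ∈ G` into `ℂ[Γ]` via `g ↦ (g,0)`. -/
def emb {G : Type*} [Group G] (g : G) : MonoidAlgebra ℂ (Gam G) :=
  MonoidAlgebra.of ℂ (Gam G) (g, 1)

/-- `ρ` as an element of `ℂ[Γ]`. -/
def rho (G : Type*) [Group G] : MonoidAlgebra ℂ (Gam G) :=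
  MonoidAlgebra.of ℂ (Gam G) (rhoEl G)

/-- `T = Σ_{g ∈ G} g ∈ ℂ[Γ]`. -/
def Tsum (G : Type*) [Group G] [Fintype G] : MonoidAlgebra ℂ (Gam G) :=
  ∑ g : G, emb g

/-- `Σ_{x ∈ H} a·x·b ∈ ℂ[Γ]`. -/
def cosetSum {G : Type*} [Group G] [Fintype G] (H : Subgroup G) [DecidablePred (· ∈ H)]
    (a b : G) : MonoidAlgebra ℂ (Gam G) :=
  ∑ x : H, emb (a * (x : G) * b)

/-- `Φ_S = T + (ρ-1)·Σ_{i∈S} Σ_{x∈H} σ_i x ∈ ℂ[Γ]`, the CM type attached to `S`. -/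
def Phi {G : Type*} [Group G] [Fintype G] (H : Subgroup G) [DecidablePred (· ∈ H)] {n : ℕ}
    (σ : Fin n → G) (S : Finset (Fin n)) : MonoidAlgebra ℂ (Gam G) :=
  Tsum G + (rho G - 1) * ∑ i ∈ S, cosetSum H (σ i) 1

/-- The ℂ-linear map `ι : ℂ[Γ] → ℂ[Γ]` sending each `γ ∈ Γ` to `γ⁻¹`. -/
def iota (Γ : Type*) [Group Γ] : MonoidAlgebra ℂ Γ →ₗ[ℂ] MonoidAlgebra ℂ Γ :=
  MonoidAlgebra.mapDomainLinearMap ℂ ℂ fun γ : Γ => γ⁻¹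

/-- `A_{Φ_S} = (1/(2hn))·Φ_S·ι(Φ_S)`. -/
def Afun {G : Type*} [Group G] [Fintype G] (H : Subgroup G) [DecidablePred (· ∈ H)] {n : ℕ}
    (σ : Fin n → G) (S : Finset (Fin n)) : MonoidAlgebra ℂ (Gam G) :=
  ((2 * (Nat.card H) * n : ℂ))⁻¹ • (Phi H σ S * iota (Gam G) (Phi H σ S))

/-- `A⁰_{Φ_S} = (1/|Γ|)·Σ_{γ∈Γ} γ·A_{Φ_S}·γ⁻¹`. -/
def A0 {G : Type*} [Group G] [Fintype G] (H : Subgroup G) [DecidablePred (· ∈ H)] {n : ℕ}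
    (σ : Fin n → G) (S : Finset (Fin n)) : MonoidAlgebra ℂ (Gam G) :=
  ((Fintype.card (Gam G) : ℂ))⁻¹ •
    ∑ γ : Gam G, MonoidAlgebra.of ℂ (Gam G) γ * Afun H σ S * MonoidAlgebra.of ℂ (Gam G) γ⁻¹


section AuxLemmas

set_option linter.unusedSectionVars false

variable {G : Type*} [Group G] [Fintype G]

lemma emb_mul (a b : G) : (emb (a * b) : MonoidAlgebra ℂ (Gam G)) = emb a * emb b := by
  rw [emb, emb, emb, ← map_mul]
  congr 1

lemma of_center_comm (t : Multiplicative (ZMod 2)) (x : MonoidAlgebra ℂ (Gam G)) :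
    MonoidAlgebra.of ℂ (Gam G) ((1 : G), t) * x = x * MonoidAlgebra.of ℂ (Gam G) ((1 : G), t) := by
  ext y
  rw [MonoidAlgebra.of_apply, MonoidAlgebra.single_mul_apply, MonoidAlgebra.mul_single_apply,
    one_mul, mul_one]
  congr 1
  simp [Prod.ext_iff, mul_comm]

lemma rho_comm (x : MonoidAlgebra ℂ (Gam G)) : rho G * x = x * rho G :=
  of_center_comm _ x

lemma rho_sq : (rho G) * rho G = 1 := by
  rw [rho, ← map_mul]
  have : rhoEl G * rhoEl G = 1 := by
    simp only [rhoEl, Prod.mk_mul_mk, one_mul, Prod.mk_eq_one, ← ofAdd_add]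
    refine ⟨trivial, ?_⟩
    decide
  rw [this, map_one]

lemma iota_of (γ : Gam G) :
    iota (Gam G) (MonoidAlgebra.of ℂ (Gam G) γ) = MonoidAlgebra.of ℂ (Gam G) γ⁻¹ := by
  rw [MonoidAlgebra.of_apply, MonoidAlgebra.of_apply]
  exact MonoidAlgebra.mapDomainLinearMap_single _ _ _

lemma iota_emb (g : G) : iota (Gam G) (emb g) = emb g⁻¹ := by
  rw [emb, iota_of]
  congr 1
  simp [Prod.ext_iff]

lemma rho_mul_emb (g : G) :
    rho G * emb g = MonoidAlgebra.of ℂ (Gam G) (g, Multiplicative.ofAdd (1 : ZMod 2)) := by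
  rw [rho, emb, ← map_mul]
  congr 1
  simp [rhoEl, Prod.ext_iff]

lemma iota_rho_emb (g : G) : iota (Gam G) (rho G * emb g) = rho G * emb g⁻¹ := by
  rw [rho_mul_emb, rho_mul_emb, iota_of]
  congr 1

variable (H : Subgroup G) [DecidablePred (· ∈ H)]

lemma Tsum_mul_emb (g : G) : Tsum G * emb g = Tsum G := by
  rw [Tsum, Finset.sum_mul]
  calc ∑ a : G, emb a * emb g = ∑ a : G, emb (a * g) :=
        Finset.sum_congr rfl fun a _ => (emb_mul a g).symm
    _ = Tsum G := Fintype.sum_equiv (Equiv.mulRight g) _ _ fun a => rfl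

lemma emb_mul_Tsum (g : G) : emb g * Tsum G = Tsum G := by
  rw [Tsum, Finset.mul_sum]
  calc ∑ a : G, emb g * emb a = ∑ a : G, emb (g * a) :=
        Finset.sum_congr rfl fun a _ => (emb_mul g a).symm
    _ = Tsum G := Fintype.sum_equiv (Equiv.mulLeft g) _ _ fun a => rfl

lemma Tsum_mul_Tsum : Tsum G * Tsum G = (Fintype.card G : ℂ) • Tsum G := by
  nth_rewrite 2 [Tsum]
  rw [Finset.mul_sum]
  simp only [Tsum_mul_emb]
  rw [Finset.sum_const, Finset.card_univ, Nat.cast_smul_eq_nsmul]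

lemma Tsum_mul_cosetSum (a b : G) :
    Tsum G * cosetSum H a b = ((Nat.card H : ℂ)) • Tsum G := by
  rw [cosetSum, Finset.mul_sum]
  simp only [Tsum_mul_emb]
  rw [Finset.sum_const, Finset.card_univ, Nat.card_eq_fintype_card, Nat.cast_smul_eq_nsmul]

lemma cosetSum_mul_Tsum (a b : G) :
    cosetSum H a b * Tsum G = ((Nat.card H : ℂ)) • Tsum G := by
  rw [cosetSum, Finset.sum_mul]
  simp only [emb_mul_Tsum]
  rw [Finset.sum_const, Finset.card_univ, Nat.card_eq_fintype_card, Nat.cast_smul_eq_nsmul]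

lemma cosetSum_mul_cosetSum (a b : G) :
    cosetSum H a 1 * cosetSum H 1 b = ((Nat.card H : ℂ)) • cosetSum H a b := by
  rw [cosetSum, cosetSum, Finset.sum_mul_sum]
  have h1 : ∀ x : H, ∑ y : H, emb (a * (x:G) * 1) * emb (1 * (y:G) * b)
      = cosetSum H a b := by
    intro x
    calc ∑ y : H, emb (a * (x:G) * 1) * emb (1 * (y:G) * b)
        = ∑ y : H, emb (a * ((x * y : H) : G) * b) := by
          refine Finset.sum_congr rfl fun y _ => ?_
          rw [← emb_mul]
          congr 1
          push_cast
          group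
      _ = cosetSum H a b := by
          rw [cosetSum]
          exact Fintype.sum_equiv (Equiv.mulLeft x) _ _ fun y => rfl
  rw [Finset.sum_congr rfl fun x _ => h1 x, Finset.sum_const, Finset.card_univ,
    Nat.card_eq_fintype_card, Nat.cast_smul_eq_nsmul]

lemma conj_cosetSum (g a b : G) :
    emb g * cosetSum H a b * emb g⁻¹ = cosetSum H (g * a) (b * g⁻¹) := by
  rw [cosetSum, cosetSum, Finset.mul_sum, Finset.sum_mul]
  refine Finset.sum_congr rfl fun x _ => ?_
  rw [← emb_mul, ← emb_mul]
  congr 1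
  group

lemma iota_Tsum : iota (Gam G) (Tsum G) = Tsum G := by
  rw [Tsum, map_sum]
  simp only [iota_emb]
  exact Fintype.sum_equiv (Equiv.inv G) _ _ fun a => rfl

lemma iota_rho_sub_one_mul_emb (w : G) :
    iota (Gam G) ((rho G - 1) * emb w) = (rho G - 1) * emb w⁻¹ := by
  rw [sub_mul, one_mul, map_sub, iota_rho_emb, iota_emb, sub_mul, one_mul]

lemma iota_rho_sub_one_mul_cosetSum (a : G) :
    iota (Gam G) ((rho G - 1) * cosetSum H a 1) = (rho G - 1) * cosetSum H 1 a⁻¹ := by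
  rw [cosetSum, Finset.mul_sum, map_sum]
  simp only [iota_rho_sub_one_mul_emb]
  calc ∑ x : H, (rho G - 1) * emb (a * (x:G) * 1)⁻¹
      = ∑ x : H, (rho G - 1) * emb (1 * (x:G) * a⁻¹) := by
        refine Fintype.sum_equiv (Equiv.inv (↥H)) _ _ fun x => ?_
        congr 1
        simp [mul_inv_rev]
    _ = (rho G - 1) * cosetSum H 1 a⁻¹ := by rw [cosetSum, Finset.mul_sum]

variable {n : ℕ} (σ : Fin n → G) (S : Finset (Fin n))

lemma iota_Phi :
    iota (Gam G) (Phi H σ S) = Tsum G + (rho G - 1) * ∑ i ∈ S, cosetSum H 1 (σ i)⁻¹ := by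
  rw [Phi, map_add, iota_Tsum, Finset.mul_sum, map_sum, Finset.mul_sum]
  congr 1
  exact Finset.sum_congr rfl fun i _ => iota_rho_sub_one_mul_cosetSum H (σ i)

lemma rho_sub_one_sq : (rho G - 1) * (rho G - 1) = (2:ℂ) • (1 - rho G) := by
  have h : (rho G - 1) * (rho G - 1) = rho G * rho G - rho G - rho G + 1 := by noncomm_ring
  rw [h, rho_sq, two_smul]
  abel

lemma mul_rho_sub_one (x : MonoidAlgebra ℂ (Gam G)) :
    x * (rho G - 1) = (rho G - 1) * x := by
  rw [mul_sub, sub_mul, ← rho_comm, mul_one, one_mul]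

lemma PhiIota (hGcard : (Fintype.card G : ℂ) = (Nat.card H : ℂ) * n) :
    Phi H σ S * iota (Gam G) (Phi H σ S)
      = ((Nat.card H : ℂ) * n) • Tsum G
        + ((2 * S.card * Nat.card H : ℂ)) • ((rho G - 1) * Tsum G)
        + ((2 * Nat.card H : ℂ)) •
            ((1 - rho G) * ∑ i ∈ S, ∑ j ∈ S, cosetSum H (σ i) ((σ j)⁻¹)) := by
  rw [iota_Phi, Phi]
  set B := ∑ i ∈ S, cosetSum H (σ i) 1 with hB
  set B' := ∑ i ∈ S, cosetSum H 1 ((σ i))⁻¹ with hB'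
  have e1 : Tsum G * Tsum G = ((Nat.card H : ℂ) * n) • Tsum G := by
    rw [Tsum_mul_Tsum, hGcard]
  have eTB' : Tsum G * B' = ((S.card : ℂ) * (Nat.card H : ℂ)) • Tsum G := by
    rw [hB', Finset.mul_sum]
    simp only [Tsum_mul_cosetSum]
    rw [Finset.sum_const, ← Nat.cast_smul_eq_nsmul ℂ, smul_smul]
  have eBT : B * Tsum G = ((S.card : ℂ) * (Nat.card H : ℂ)) • Tsum G := by
    rw [hB, Finset.sum_mul]
    simp only [cosetSum_mul_Tsum]
    rw [Finset.sum_const, ← Nat.cast_smul_eq_nsmul ℂ, smul_smul]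
  have eBB' : B * B' = ((Nat.card H : ℂ)) • ∑ i ∈ S, ∑ j ∈ S, cosetSum H (σ i) ((σ j)⁻¹) := by
    rw [hB, hB', Finset.sum_mul_sum]
    rw [Finset.smul_sum]
    refine Finset.sum_congr rfl fun i _ => ?_
    rw [Finset.smul_sum]
    exact Finset.sum_congr rfl fun j _ => cosetSum_mul_cosetSum H (σ i) ((σ j))⁻¹
  have e2 : Tsum G * ((rho G - 1) * B')
      = ((S.card : ℂ) * (Nat.card H : ℂ)) • ((rho G - 1) * Tsum G) := by
    rw [← mul_assoc, mul_rho_sub_one, mul_assoc, eTB', mul_smul_comm]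
  have e3 : ((rho G - 1) * B) * Tsum G
      = ((S.card : ℂ) * (Nat.card H : ℂ)) • ((rho G - 1) * Tsum G) := by
    rw [mul_assoc, eBT, mul_smul_comm]
  have e4 : ((rho G - 1) * B) * ((rho G - 1) * B')
      = ((2 * Nat.card H : ℂ)) •
          ((1 - rho G) * ∑ i ∈ S, ∑ j ∈ S, cosetSum H (σ i) ((σ j)⁻¹)) := by
    calc ((rho G - 1) * B) * ((rho G - 1) * B')
        = ((rho G - 1) * (rho G - 1)) * (B * B') := by
          rw [mul_assoc, ← mul_assoc B, mul_rho_sub_one, mul_assoc, ← mul_assoc]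
      _ = ((2 * Nat.card H : ℂ)) •
            ((1 - rho G) * ∑ i ∈ S, ∑ j ∈ S, cosetSum H (σ i) ((σ j)⁻¹)) := by
          rw [rho_sub_one_sq, eBB', smul_mul_assoc, mul_smul_comm, smul_smul]
  calc (Tsum G + (rho G - 1) * B) * (Tsum G + (rho G - 1) * B')
      = Tsum G * Tsum G + Tsum G * ((rho G - 1) * B')
        + (((rho G - 1) * B) * Tsum G + ((rho G - 1) * B) * ((rho G - 1) * B')) := by
        rw [add_mul, mul_add, mul_add]
    _ = _ := by
        rw [e1, e2, e3, e4]
        match_scalars <;> ring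

lemma conj_gamma (g : G) (t : Multiplicative (ZMod 2)) (X : MonoidAlgebra ℂ (Gam G)) :
    MonoidAlgebra.of ℂ (Gam G) (g, t) * X * MonoidAlgebra.of ℂ (Gam G) ((g, t) : Gam G)⁻¹
      = emb g * X * emb g⁻¹ := by
  have h1 : MonoidAlgebra.of ℂ (Gam G) (g, t)
      = emb g * MonoidAlgebra.of ℂ (Gam G) ((1 : G), t) := by
    rw [emb, ← map_mul]
    congr 1
    simp [Prod.ext_iff]
  have h2 : MonoidAlgebra.of ℂ (Gam G) ((g, t) : Gam G)⁻¹
      = MonoidAlgebra.of ℂ (Gam G) ((1 : G), t⁻¹) * emb g⁻¹ := by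
    rw [emb, ← map_mul]
    congr 1
    simp [Prod.ext_iff]
  have key : MonoidAlgebra.of ℂ (Gam G) ((1 : G), t) * X
      * MonoidAlgebra.of ℂ (Gam G) ((1 : G), t⁻¹) = X := by
    rw [of_center_comm, mul_assoc, ← map_mul]
    have h3 : (((1 : G), t) : Gam G) * ((1 : G), t⁻¹) = (1 : Gam G) := by
      simp [Prod.ext_iff]
    rw [h3, map_one, mul_one]
  calc MonoidAlgebra.of ℂ (Gam G) (g, t) * X * MonoidAlgebra.of ℂ (Gam G) ((g, t) : Gam G)⁻¹
      = emb g * (MonoidAlgebra.of ℂ (Gam G) ((1 : G), t) * X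
          * MonoidAlgebra.of ℂ (Gam G) ((1 : G), t⁻¹)) * emb g⁻¹ := by
        rw [h1, h2]
        simp only [mul_assoc]
    _ = emb g * X * emb g⁻¹ := by rw [key]

lemma sum_conj (X : MonoidAlgebra ℂ (Gam G)) :
    ∑ γ : Gam G, MonoidAlgebra.of ℂ (Gam G) γ * X * MonoidAlgebra.of ℂ (Gam G) γ⁻¹
      = (2 : ℂ) • ∑ g : G, emb g * X * emb g⁻¹ := by
  rw [Fintype.sum_prod_type]
  have h : ∀ g : G, (∑ t : Multiplicative (ZMod 2),
      MonoidAlgebra.of ℂ (Gam G) (g, t) * X * MonoidAlgebra.of ℂ (Gam G) ((g, t) : Gam G)⁻¹)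
      = (2 : ℂ) • (emb g * X * emb g⁻¹) := by
    intro g
    simp only [conj_gamma]
    rw [Finset.sum_const, Finset.card_univ, ← Nat.cast_smul_eq_nsmul ℂ]
    norm_num
  rw [Finset.sum_congr rfl fun g _ => h g, ← Finset.smul_sum]

lemma conj_Tsum (g : G) : emb g * Tsum G * emb g⁻¹ = Tsum G := by
  rw [emb_mul_Tsum, Tsum_mul_emb]

lemma conj_rho_sub_one_mul (g : G) (X : MonoidAlgebra ℂ (Gam G)) :
    emb g * ((rho G - 1) * X) * emb g⁻¹ = (rho G - 1) * (emb g * X * emb g⁻¹) := by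
  rw [← mul_assoc, mul_rho_sub_one]
  simp only [mul_assoc]

lemma mul_one_sub_rho (x : MonoidAlgebra ℂ (Gam G)) :
    x * (1 - rho G) = (1 - rho G) * x := by
  rw [mul_sub, sub_mul, ← rho_comm, mul_one, one_mul]

lemma conj_one_sub_rho_mul (g : G) (X : MonoidAlgebra ℂ (Gam G)) :
    emb g * ((1 - rho G) * X) * emb g⁻¹ = (1 - rho G) * (emb g * X * emb g⁻¹) := by
  rw [← mul_assoc, mul_one_sub_rho]
  simp only [mul_assoc]

end AuxLemmas

/-- Theorem 2.1: explicit formula for the class function `A⁰_{Φ_S}`. -/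
theorem A0_eq {G : Type*} [Group G] [Fintype G] (H : Subgroup G) [DecidablePred (· ∈ H)]
    {n : ℕ} (σ : Fin n → G)
    (hσ : Function.Bijective fun i : Fin n => (QuotientGroup.mk (σ i) : G ⧸ H))
    (S : Finset (Fin n)) :
    A0 H σ S
      = (2 : ℂ)⁻¹ • Tsum G
        - ((S.card : ℂ) / (n : ℂ)) • ((1 - rho G) * Tsum G)
        + ((S.card : ℂ) / ((Nat.card H : ℂ) * (n : ℂ) ^ 2)) •
            ((1 - rho G) * ∑ g : G, cosetSum H g g⁻¹)
        + (((Nat.card H : ℂ) * (n : ℂ) ^ 2))⁻¹ •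
            ((1 - rho G) *
              ∑ g : G, ∑ i ∈ S, ∑ j ∈ S.erase i, cosetSum H (g * σ i) ((σ j)⁻¹ * g⁻¹)) := by
  classical
  -- cardinalities
  have hq : Nat.card (G ⧸ H) = n := by
    have h := Nat.card_eq_of_bijective _ hσ
    simpa using h.symm
  have hGn : Fintype.card G = Nat.card H * n := by
    rw [← Nat.card_eq_fintype_card, Subgroup.card_eq_card_quotient_mul_card_subgroup H, hq,
      mul_comm]
  have hnpos : 0 < n := by
    rw [← hq]; exact Nat.card_pos
  have hn0 : (n : ℂ) ≠ 0 := Nat.cast_ne_zero.mpr hnpos.ne'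
  have hH0 : (Nat.card H : ℂ) ≠ 0 := Nat.cast_ne_zero.mpr (Nat.card_pos (α := H)).ne'
  have hGcard : ((Fintype.card G : ℂ)) = (Nat.card H : ℂ) * n := by
    rw [hGn]; push_cast; ring
  have hGamCard : ((Fintype.card (Gam G) : ℂ)) = 2 * ((Nat.card H : ℂ) * n) := by
    have : Fintype.card (Gam G) = Fintype.card G * 2 := by
      rw [Fintype.card_prod]
      congr 1
    rw [this]; push_cast [hGn]; ring
  -- conjugates of Afun
  set C0 : MonoidAlgebra ℂ (Gam G) := ∑ g : G, cosetSum H g g⁻¹ with hC0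
  set OffD : MonoidAlgebra ℂ (Gam G) :=
    ∑ g : G, ∑ i ∈ S, ∑ j ∈ S.erase i, cosetSum H (g * σ i) ((σ j)⁻¹ * g⁻¹) with hOffD
  have convAfun : ∀ g : G, emb g * Afun H σ S * emb g⁻¹
      = ((2 * (Nat.card H) * n : ℂ))⁻¹ •
          (((Nat.card H : ℂ) * n) • Tsum G
            + ((2 * S.card * Nat.card H : ℂ)) • ((rho G - 1) * Tsum G)
            + ((2 * Nat.card H : ℂ)) •
                ((1 - rho G) * ∑ i ∈ S, ∑ j ∈ S, cosetSum H (g * σ i) ((σ j)⁻¹ * g⁻¹))) := by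
    intro g
    rw [Afun, PhiIota H σ S hGcard, mul_smul_comm, smul_mul_assoc]
    congr 1
    simp only [mul_add, add_mul]
    congr 1
    · congr 1
      · rw [mul_smul_comm, smul_mul_assoc, emb_mul_Tsum, Tsum_mul_emb]
      · rw [mul_smul_comm, smul_mul_assoc, conj_rho_sub_one_mul, conj_Tsum]
    · have hconjD : emb g * (∑ i ∈ S, ∑ j ∈ S, cosetSum H (σ i) ((σ j))⁻¹) * emb g⁻¹
          = ∑ i ∈ S, ∑ j ∈ S, cosetSum H (g * σ i) ((σ j)⁻¹ * g⁻¹) := by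
        rw [Finset.mul_sum, Finset.sum_mul]
        refine Finset.sum_congr rfl fun i _ => ?_
        rw [Finset.mul_sum, Finset.sum_mul]
        exact Finset.sum_congr rfl fun j _ => conj_cosetSum H g (σ i) ((σ j))⁻¹
      rw [mul_smul_comm, smul_mul_assoc, conj_one_sub_rho_mul, hconjD]
  -- the diagonal/off-diagonal split
  have hdiag : ∀ i ∈ S, ∑ g : G, cosetSum H (g * σ i) ((σ i)⁻¹ * g⁻¹) = C0 := by
    intro i _
    refine Fintype.sum_equiv (Equiv.mulRight (σ i)) _ _ fun g => ?_
    simp only [Equiv.coe_mulRight]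
    congr 1
    rw [mul_inv_rev]
  have hDsplit : (∑ g : G, ∑ i ∈ S, ∑ j ∈ S, cosetSum H (g * σ i) ((σ j)⁻¹ * g⁻¹))
      = (S.card : ℂ) • C0 + OffD := by
    have h1 : ∀ g : G, (∑ i ∈ S, ∑ j ∈ S, cosetSum H (g * σ i) ((σ j)⁻¹ * g⁻¹))
        = (∑ i ∈ S, cosetSum H (g * σ i) ((σ i)⁻¹ * g⁻¹))
          + ∑ i ∈ S, ∑ j ∈ S.erase i, cosetSum H (g * σ i) ((σ j)⁻¹ * g⁻¹) := by
      intro g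
      rw [← Finset.sum_add_distrib]
      exact Finset.sum_congr rfl fun i hi => (Finset.add_sum_erase S _ hi).symm
    rw [Finset.sum_congr rfl fun g _ => h1 g, Finset.sum_add_distrib, hOffD]
    congr 1
    rw [Finset.sum_comm, Finset.sum_congr rfl hdiag, Finset.sum_const,
      ← Nat.cast_smul_eq_nsmul ℂ]
  -- assemble
  rw [A0, sum_conj, Finset.sum_congr rfl fun g _ => convAfun g, ← Finset.smul_sum,
    Finset.sum_add_distrib, Finset.sum_add_distrib, Finset.sum_const, Finset.sum_const,
    Finset.card_univ, ← Finset.smul_sum, ← Finset.mul_sum, hDsplit]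
  simp only [← Nat.cast_smul_eq_nsmul ℂ]
  have hneg : (rho G - 1) * Tsum G = -((1 - rho G) * Tsum G) := by noncomm_ring
  rw [hneg, hGcard, hGamCard, mul_add, mul_smul_comm]
  match_scalars <;> (field_simp; try ring)

end
end

section
/- (Linear-algebra content of Theorem 2.4 / Theorem 1.3) With notation as in the setup, let L₁, L₂ : ℂ[Γ] → ℂ be ℂ-linear maps such that L₁(A^0_{Φ_S}) = L₂(A^0_{Φ_S}) for every subset S ⊆ {1,…,n} with #S ≤ 2. Then L₁(A^0_{Φ_S}) = L₂(A^0_{Φ_S}) for every subset S ⊆ {1,…,n}. (Applied to Colmez's height ht and to Z(0,·), together with the Yang–Yin theorem for signatures (n,0) and (n−1,1), this reduces the Colmez conjecture for a unitary CM field E = kF to CM types of signature (n−2,2).) -/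
open MonoidAlgebra Finset

noncomputable section

/-- Combinatorial key: a "quadratic" function of a finite set that vanishes on all
sets of cardinality ≤ 2 vanishes identically. -/
lemma quad_vanish {n : ℕ} (c : ℂ) (a : Fin n → ℂ) (b : Fin n → Fin n → ℂ)
    (h : ∀ S : Finset (Fin n), S.card ≤ 2 →
      c + ∑ i ∈ S, a i + ∑ i ∈ S, ∑ j ∈ S, b i j = 0) (S : Finset (Fin n)) :
    c + ∑ i ∈ S, a i + ∑ i ∈ S, ∑ j ∈ S, b i j = 0 := by
  have hc : c = 0 := by simpa using h ∅ (by simp)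
  have ha : ∀ i, a i + b i i = 0 := by
    intro i
    have := h {i} (by simp)
    simp [hc] at this
    linear_combination this
  have hb : ∀ i j, i ≠ j → b i j + b j i = 0 := by
    intro i j hij
    have hpair := h {i, j} (by rw [Finset.card_pair hij])
    simp only [Finset.sum_pair hij, hc, zero_add] at hpair
    linear_combination hpair - ha i - ha j
  have key : ∑ i ∈ S, ∑ j ∈ S, b i j
      = (∑ i ∈ S, b i i) + ∑ i ∈ S, ∑ j ∈ S, (if i = j then 0 else b i j) := by
    rw [← Finset.sum_add_distrib]
    refine Finset.sum_congr rfl fun i hi => ?_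
    have hsplit : ∀ j, b i j = (if i = j then b i j else 0) + (if i = j then 0 else b i j) := by
      intro j; by_cases hij : i = j <;> simp [hij]
    calc ∑ j ∈ S, b i j
        = ∑ j ∈ S, ((if i = j then b i j else 0) + (if i = j then 0 else b i j)) :=
          Finset.sum_congr rfl fun j _ => hsplit j
      _ = (∑ j ∈ S, if i = j then b i j else 0) + ∑ j ∈ S, (if i = j then 0 else b i j) :=
          Finset.sum_add_distrib
      _ = b i i + ∑ j ∈ S, (if i = j then 0 else b i j) := by
          rw [Finset.sum_ite_eq S i (fun j => b i j), if_pos hi]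
  have hswap : (∑ i ∈ S, ∑ j ∈ S, (if i = j then 0 else b i j))
      = ∑ i ∈ S, ∑ j ∈ S, (if j = i then 0 else b j i) := Finset.sum_comm
  have hs : (∑ i ∈ S, ∑ j ∈ S, (if i = j then 0 else b i j)) = 0 := by
    have h2 : (∑ i ∈ S, ∑ j ∈ S, (if i = j then 0 else b i j)) * 2 = 0 := by
      rw [mul_two]
      nth_rewrite 2 [hswap]
      rw [← Finset.sum_add_distrib]
      refine Finset.sum_eq_zero fun i _ => ?_
      rw [← Finset.sum_add_distrib]
      refine Finset.sum_eq_zero fun j _ => ?_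
      by_cases hij : i = j
      · simp [hij]
      · rw [if_neg hij, if_neg (Ne.symm hij)]
        exact hb i j hij
    rcases mul_eq_zero.mp h2 with h0 | h0
    · exact h0
    · exact absurd h0 two_ne_zero
  rw [hc, key, hs, zero_add, add_zero, ← Finset.sum_add_distrib]
  exact Finset.sum_eq_zero fun i _ => ha i

/-- The averaged conjugation operator (with a scalar), as a linear map. -/
def conjAvg (G : Type*) [Group G] [Fintype G] (c : ℂ) :
    MonoidAlgebra ℂ (Gam G) →ₗ[ℂ] MonoidAlgebra ℂ (Gam G) :=
  c • ∑ γ : Gam G, (LinearMap.mulLeft ℂ (MonoidAlgebra.of ℂ (Gam G) γ)).comp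
    (LinearMap.mulRight ℂ (MonoidAlgebra.of ℂ (Gam G) γ⁻¹))

lemma A0_eq_conjAvg {G : Type*} [Group G] [Fintype G] (H : Subgroup G)
    [DecidablePred (· ∈ H)] {n : ℕ} (σ : Fin n → G) (S : Finset (Fin n)) :
    A0 H σ S = conjAvg G ((Fintype.card (Gam G) : ℂ)⁻¹ * (2 * (Nat.card H) * n : ℂ)⁻¹)
      (Phi H σ S * iota (Gam G) (Phi H σ S)) := by
  unfold A0 Afun conjAvg
  simp only [LinearMap.smul_apply, LinearMap.sum_apply, LinearMap.comp_apply,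
    LinearMap.mulLeft_apply, LinearMap.mulRight_apply, mul_smul_comm, smul_mul_assoc,
    mul_assoc, ← Finset.smul_sum, smul_smul]

/-- The quadratic expansion of `Φ_S · ι(Φ_S)` in terms of the indicator of `S`. -/
lemma prod_expand {G : Type*} [Group G] [Fintype G] (H : Subgroup G)
    [DecidablePred (· ∈ H)] {n : ℕ} (σ : Fin n → G) (S : Finset (Fin n)) :
    Phi H σ S * iota (Gam G) (Phi H σ S)
      = Tsum G * iota (Gam G) (Tsum G)
        + ∑ i ∈ S, (Tsum G * iota (Gam G) ((rho G - 1) * cosetSum H (σ i) 1)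
            + ((rho G - 1) * cosetSum H (σ i) 1) * iota (Gam G) (Tsum G))
        + ∑ i ∈ S, ∑ j ∈ S,
            ((rho G - 1) * cosetSum H (σ i) 1)
              * iota (Gam G) ((rho G - 1) * cosetSum H (σ j) 1) := by
  unfold Phi
  rw [Finset.mul_sum, map_add, map_sum, add_mul, mul_add, mul_add,
    Finset.mul_sum, Finset.sum_mul, Finset.sum_mul_sum, Finset.sum_add_distrib]
  abel

/-- linear-algebra content of Theorem 2.4 / Theorem 1.3: if two ℂ-linear
functionals on `ℂ[Γ]` agree on `A⁰_{Φ_S}` for all `S` with `#S ≤ 2`, then they agree on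
`A⁰_{Φ_S}` for every `S`. -/
theorem linear_functionals_agree {G : Type*} [Group G] [Fintype G] (H : Subgroup G)
    [DecidablePred (· ∈ H)] {n : ℕ} (σ : Fin n → G)
    (hσ : Function.Bijective fun i : Fin n => (QuotientGroup.mk (σ i) : G ⧸ H))
    (L₁ L₂ : MonoidAlgebra ℂ (Gam G) →ₗ[ℂ] ℂ)
    (hL : ∀ S : Finset (Fin n), S.card ≤ 2 → L₁ (A0 H σ S) = L₂ (A0 H σ S)) :
    ∀ S : Finset (Fin n), L₁ (A0 H σ S) = L₂ (A0 H σ S) := by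
  intro S
  set cc : ℂ := (Fintype.card (Gam G) : ℂ)⁻¹ * (2 * (Nat.card H) * n : ℂ)⁻¹ with hcc
  set Λ : MonoidAlgebra ℂ (Gam G) →ₗ[ℂ] ℂ := (L₁ - L₂).comp (conjAvg G cc) with hΛ
  have hA0 : ∀ S' : Finset (Fin n),
      L₁ (A0 H σ S') - L₂ (A0 H σ S')
        = Λ (Tsum G * iota (Gam G) (Tsum G))
          + ∑ i ∈ S', Λ (Tsum G * iota (Gam G) ((rho G - 1) * cosetSum H (σ i) 1)
              + ((rho G - 1) * cosetSum H (σ i) 1) * iota (Gam G) (Tsum G))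
          + ∑ i ∈ S', ∑ j ∈ S', Λ (((rho G - 1) * cosetSum H (σ i) 1)
              * iota (Gam G) ((rho G - 1) * cosetSum H (σ j) 1)) := by
    intro S'
    have : L₁ (A0 H σ S') - L₂ (A0 H σ S') = Λ (Phi H σ S' * iota (Gam G) (Phi H σ S')) := by
      rw [hΛ, LinearMap.comp_apply, ← A0_eq_conjAvg, LinearMap.sub_apply]
    rw [this, prod_expand, map_add, map_add, map_sum]
    congr 1
    rw [map_sum]
    exact Finset.sum_congr rfl fun i _ => map_sum Λ _ S'
  have hzero := quad_vanish
    (Λ (Tsum G * iota (Gam G) (Tsum G)))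
    (fun i => Λ (Tsum G * iota (Gam G) ((rho G - 1) * cosetSum H (σ i) 1)
        + ((rho G - 1) * cosetSum H (σ i) 1) * iota (Gam G) (Tsum G)))
    (fun i j => Λ (((rho G - 1) * cosetSum H (σ i) 1)
        * iota (Gam G) ((rho G - 1) * cosetSum H (σ j) 1)))
    (fun S' hS' => by rw [← hA0 S']; exact sub_eq_zero_of_eq (hL S' hS')) S
  have := hA0 S
  rw [hzero] at this
  exact sub_eq_zero.mp this

end
end

section
/- With notation as in the setup, suppose the action of G by left multiplication on the coset space G/H is 2-transitive. Then for every subset S ⊆ {1,…,n} of cardinality ε one has in ℂ[Γ]: A^0_{Φ_S} = (ε(ε−1)/2)·A^0_{Φ_{{1,2}}} − ε(ε−2)·A^0_{Φ_{{1}}} + ((ε−1)(ε−2)/2)·A^0_{Φ_∅}. -/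
open MonoidAlgebra Finset

noncomputable section

set_option linter.unusedSectionVars false

namespace A0Aux

variable {G : Type*} [Group G] [Fintype G]

/-- Shorthand for the canonical embedding `Γ → ℂ[Γ]`. -/
def e (γ : Gam G) : MonoidAlgebra ℂ (Gam G) := MonoidAlgebra.of ℂ (Gam G) γ

lemma e_mul (γ δ : Gam G) : e γ * e δ = e (γ * δ) := by
  simp [e]

lemma e_one : e (1 : Gam G) = 1 := by
  simp [e, MonoidAlgebra.one_def]

lemma emb_eq (g : G) : emb g = e (g, 1) := rfl

lemma emb_mul (g g' : G) : emb g * emb g' = emb (g * g') := by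
  rw [emb_eq, emb_eq, emb_eq, e_mul]
  congr 1

lemma rho_eq : rho G = e (rhoEl G) := rfl

lemma iota_e (γ : Gam G) : iota (Gam G) (e γ) = e γ⁻¹ := by
  simp [iota, e, MonoidAlgebra.of_apply, MonoidAlgebra.mapDomainLinearMap_single]

lemma rhoEl_comm (δ : Gam G) : rhoEl G * δ = δ * rhoEl G := by
  cases δ with
  | mk g u => simp [rhoEl, Prod.ext_iff, mul_comm]

lemma central_mul {γ : Gam G} (hγ : ∀ δ, γ * δ = δ * γ) (x : MonoidAlgebra ℂ (Gam G)) :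
    e γ * x = x * e γ := by
  have hinv : ∀ a : Gam G, γ⁻¹ * a = a * γ⁻¹ := by
    intro a
    have h2 : γ⁻¹ * a * γ = a := by
      rw [mul_assoc, ← hγ a, ← mul_assoc, inv_mul_cancel, one_mul]
    calc γ⁻¹ * a = γ⁻¹ * a * γ * γ⁻¹ := by rw [mul_assoc, mul_inv_cancel, mul_one]
    _ = a * γ⁻¹ := by rw [h2]
  ext a
  rw [e, MonoidAlgebra.of_apply, MonoidAlgebra.single_mul_apply, MonoidAlgebra.mul_single_apply,
    hinv a]
  ring

lemma rho_comm (x : MonoidAlgebra ℂ (Gam G)) : rho G * x = x * rho G :=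
  central_mul rhoEl_comm x

lemma r_comm (x : MonoidAlgebra ℂ (Gam G)) :
    (rho G - 1) * x = x * (rho G - 1) := by
  rw [sub_mul, mul_sub, rho_comm, one_mul, mul_one]

lemma rho_sq : rho G * rho G = 1 := by
  rw [rho_eq, e_mul]
  have h2 : Multiplicative.ofAdd (1 : ZMod 2) * Multiplicative.ofAdd (1 : ZMod 2) = 1 := by
    decide
  have : rhoEl G * rhoEl G = 1 := by
    rw [rhoEl, Prod.mk_mul_mk, one_mul, h2]
    rfl
  rw [this, e_one]

lemma r_sq : (rho G - 1) * (rho G - 1) = (-2 : ℂ) • (rho G - 1) := by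
  have h : (rho G - 1) * (rho G - 1) = rho G * rho G - rho G - rho G + 1 := by noncomm_ring
  rw [h, rho_sq]
  module

/-- Partial sums of `T` by `ℤ/2`-component. -/
def Tpart (u : Multiplicative (ZMod 2)) : MonoidAlgebra ℂ (Gam G) := ∑ g : G, e (g, u)

lemma Tsum_eq : Tsum G = Tpart (1 : Multiplicative (ZMod 2)) := rfl

lemma Tpart_mul_e (u v : Multiplicative (ZMod 2)) (g : G) :
    Tpart u * e (g, v) = Tpart (u * v) := by
  rw [Tpart, Finset.sum_mul, Tpart]
  refine Fintype.sum_bijective (· * g) (Group.mulRight_bijective g) _ _ fun x => ?_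
  rw [e_mul]; rfl

lemma e_mul_Tpart (u v : Multiplicative (ZMod 2)) (g : G) :
    e (g, u) * Tpart v = Tpart (u * v) := by
  rw [Tpart, Finset.mul_sum, Tpart]
  refine Fintype.sum_bijective (g * ·) (Group.mulLeft_bijective g) _ _ fun x => ?_
  rw [e_mul]; rfl

lemma e_comm_Tpart (γ : Gam G) (v : Multiplicative (ZMod 2)) :
    e γ * Tpart v = Tpart v * e γ := by
  cases γ with
  | mk g u => rw [e_mul_Tpart, Tpart_mul_e, mul_comm]

lemma Tsum_mul_emb (g : G) : Tsum G * emb g = Tsum G := by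
  rw [Tsum_eq, emb_eq, Tpart_mul_e, mul_one]

lemma emb_mul_Tsum (g : G) : emb g * Tsum G = Tsum G := by
  rw [Tsum_eq, emb_eq, e_mul_Tpart, one_mul]

lemma Tsum_mul_Tsum : Tsum G * Tsum G = (Fintype.card G : ℂ) • Tsum G :=
  calc Tsum G * Tsum G = ∑ g : G, emb g * Tsum G := by rw [Tsum, Finset.sum_mul]
    _ = ∑ _g : G, Tsum G := Finset.sum_congr rfl fun g _ => emb_mul_Tsum g
    _ = (Fintype.card G : ℂ) • Tsum G := by
        rw [Finset.sum_const, Finset.card_univ, Nat.cast_smul_eq_nsmul]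

/-- The conjugation-averaging linear map. -/
def avgL : MonoidAlgebra ℂ (Gam G) →ₗ[ℂ] MonoidAlgebra ℂ (Gam G) :=
  (Fintype.card (Gam G) : ℂ)⁻¹ •
    ∑ γ : Gam G, (LinearMap.mulRight ℂ (e γ⁻¹)).comp (LinearMap.mulLeft ℂ (e γ))

lemma avgL_apply (x : MonoidAlgebra ℂ (Gam G)) :
    avgL x = (Fintype.card (Gam G) : ℂ)⁻¹ • ∑ γ : Gam G, e γ * x * e γ⁻¹ := by
  simp [avgL, LinearMap.sum_apply]

lemma A0_eq_avg (H : Subgroup G) [DecidablePred (· ∈ H)] {n : ℕ} (σ : Fin n → G)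
    (S : Finset (Fin n)) : A0 H σ S = avgL (Afun H σ S) := by
  rw [avgL_apply]; rfl

lemma avgL_conj (γ : Gam G) (x : MonoidAlgebra ℂ (Gam G)) :
    avgL (e γ * x * e γ⁻¹) = avgL x := by
  rw [avgL_apply, avgL_apply]
  refine congrArg (_ • ·) ?_
  refine Fintype.sum_bijective (· * γ) (Group.mulRight_bijective γ) _ _ fun δ => ?_
  rw [mul_inv_rev, ← e_mul δ γ, ← e_mul γ⁻¹ δ⁻¹]
  noncomm_ring

lemma avgL_central (x : MonoidAlgebra ℂ (Gam G)) (hx : ∀ γ : Gam G, e γ * x = x * e γ) :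
    avgL x = x := by
  rw [avgL_apply]
  have h1 : ∀ γ : Gam G, e γ * x * e γ⁻¹ = x := fun γ => by
    rw [hx, mul_assoc, e_mul, mul_inv_cancel, e_one, mul_one]
  rw [Finset.sum_congr rfl fun γ _ => h1 γ, Finset.sum_const, Finset.card_univ,
    ← Nat.cast_smul_eq_nsmul ℂ, smul_smul, inv_mul_cancel₀, one_smul]
  exact_mod_cast Fintype.card_ne_zero

lemma avgL_central_mul (c : MonoidAlgebra ℂ (Gam G)) (hc : ∀ γ : Gam G, e γ * c = c * e γ)
    (x : MonoidAlgebra ℂ (Gam G)) : avgL (c * x) = c * avgL x := by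
  rw [avgL_apply, avgL_apply, mul_smul_comm, Finset.mul_sum]
  congr 1
  refine Finset.sum_congr rfl fun γ _ => ?_
  rw [show e γ * (c * x) = c * (e γ * x) by rw [← mul_assoc, hc, mul_assoc], mul_assoc, mul_assoc]

lemma e_comm_r (γ : Gam G) : e γ * (rho G - 1) = (rho G - 1) * e γ :=
  (r_comm (e γ)).symm

lemma avgL_Tsum : avgL (Tsum G) = Tsum G :=
  avgL_central _ fun γ => by rw [Tsum_eq]; exact e_comm_Tpart γ 1

lemma avgL_r_Tsum : avgL ((rho G - 1) * Tsum G) = (rho G - 1) * Tsum G := by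
  rw [avgL_central_mul _ e_comm_r, avgL_Tsum]

end A0Aux
namespace A0Aux

variable {G : Type*} [Group G] [Fintype G] (H : Subgroup G) [DecidablePred (· ∈ H)]

lemma Tsum_mul_cosetSum (a b : G) :
    Tsum G * cosetSum H a b = (Fintype.card H : ℂ) • Tsum G :=
  calc Tsum G * cosetSum H a b = ∑ x : H, Tsum G * emb (a * x * b) := by
        rw [cosetSum, Finset.mul_sum]
    _ = ∑ _x : H, Tsum G := Finset.sum_congr rfl fun x _ => Tsum_mul_emb _
    _ = _ := by rw [Finset.sum_const, Finset.card_univ, Nat.cast_smul_eq_nsmul]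

lemma cosetSum_mul_Tsum (a b : G) :
    cosetSum H a b * Tsum G = (Fintype.card H : ℂ) • Tsum G :=
  calc cosetSum H a b * Tsum G = ∑ x : H, emb (a * x * b) * Tsum G := by
        rw [cosetSum, Finset.sum_mul]
    _ = ∑ _x : H, Tsum G := Finset.sum_congr rfl fun x _ => emb_mul_Tsum _
    _ = _ := by rw [Finset.sum_const, Finset.card_univ, Nat.cast_smul_eq_nsmul]

lemma cosetSum_mul (a b : G) :
    cosetSum H a 1 * cosetSum H 1 b = (Fintype.card H : ℂ) • cosetSum H a b := by
  rw [cosetSum, cosetSum, Finset.sum_mul_sum]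
  have h1 : ∀ x : H, (∑ y : H, emb (a * x * 1) * emb (1 * y * b)) = cosetSum H a b := by
    intro x
    rw [cosetSum]
    refine Fintype.sum_bijective (fun y : H => x * y) (Group.mulLeft_bijective x) _ _ fun y => ?_
    rw [emb_mul]
    congr 1
    push_cast
    group
  rw [Finset.sum_congr rfl fun x _ => h1 x, Finset.sum_const, Finset.card_univ,
    Nat.cast_smul_eq_nsmul]

lemma rho_mul_cosetSum (a b : G) :
    rho G * cosetSum H a b = ∑ x : H, e (a * x * b, Multiplicative.ofAdd (1 : ZMod 2)) := by
  rw [cosetSum, Finset.mul_sum]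
  refine Finset.sum_congr rfl fun x _ => ?_
  rw [emb_eq, rho_eq, e_mul, rhoEl, Prod.mk_mul_mk, one_mul, mul_one]

lemma ofAdd_one_inv :
    (Multiplicative.ofAdd (1 : ZMod 2))⁻¹ = Multiplicative.ofAdd (1 : ZMod 2) := by decide

lemma iota_cosetSum (a b : G) :
    iota (Gam G) (cosetSum H a b) = cosetSum H b⁻¹ a⁻¹ := by
  rw [cosetSum, map_sum, cosetSum]
  refine Fintype.sum_bijective (fun x : H => x⁻¹) inv_involutive.bijective _ _ fun x => ?_
  rw [emb_eq, iota_e, emb_eq]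
  congr 1
  simp [Prod.ext_iff, mul_assoc]

lemma iota_rho_cosetSum (a b : G) :
    iota (Gam G) (rho G * cosetSum H a b) = rho G * cosetSum H b⁻¹ a⁻¹ := by
  rw [rho_mul_cosetSum, map_sum, rho_mul_cosetSum]
  refine Fintype.sum_bijective (fun x : H => x⁻¹) inv_involutive.bijective _ _ fun x => ?_
  rw [iota_e]
  congr 1
  simp [Prod.ext_iff, mul_assoc, ofAdd_one_inv]

lemma iota_Phi {n : ℕ} (σ : Fin n → G) (S : Finset (Fin n)) :
    iota (Gam G) (Phi H σ S) = Tsum G + (rho G - 1) * ∑ i ∈ S, cosetSum H 1 ((σ i)⁻¹) := by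
  rw [Phi, map_add]
  congr 1
  · rw [Tsum, map_sum]
    refine Fintype.sum_bijective (fun g : G => g⁻¹) inv_involutive.bijective _ _ fun g => ?_
    rw [emb_eq, iota_e, emb_eq]
    congr 1
    simp [Prod.ext_iff]
  · rw [Finset.mul_sum, Finset.mul_sum, map_sum]
    refine Finset.sum_congr rfl fun i _ => ?_
    simp only [sub_mul, one_mul, map_sub, iota_rho_cosetSum, iota_cosetSum, inv_one]

lemma emb_conj_cosetSum (g a b : G) :
    emb g * cosetSum H a b * emb g⁻¹ = cosetSum H (g * a) (b * g⁻¹) := by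
  rw [cosetSum, cosetSum, Finset.mul_sum, Finset.sum_mul]
  refine Finset.sum_congr rfl fun x _ => ?_
  rw [emb_mul, emb_mul]
  congr 1
  group

lemma cosetSum_absorb (k l : G) (a b : H) :
    cosetSum H (k * a) ((b : G) * l) = cosetSum H k l := by
  rw [cosetSum, cosetSum]
  refine Fintype.sum_bijective (fun x : H => a * x * b)
    (((Equiv.mulLeft a).trans (Equiv.mulRight b)).bijective) _ _ fun x => ?_
  congr 1
  push_cast
  group

lemma avgL_cosetSum_conj (p q u v g : G)
    (h1 : (QuotientGroup.mk (g * p) : G ⧸ H) = QuotientGroup.mk u)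
    (h2 : (QuotientGroup.mk (g * q) : G ⧸ H) = QuotientGroup.mk v) :
    avgL (cosetSum H u v⁻¹) = avgL (cosetSum H p q⁻¹) := by
  have ha : (g * p)⁻¹ * u ∈ H := QuotientGroup.eq.mp h1
  have hb : (g * q)⁻¹ * v ∈ H := QuotientGroup.eq.mp h2
  have key : emb g * cosetSum H p q⁻¹ * emb g⁻¹ = cosetSum H u v⁻¹ := by
    rw [emb_conj_cosetSum, show q⁻¹ * g⁻¹ = (g * q)⁻¹ from (mul_inv_rev g q).symm]
    have habs := cosetSum_absorb H (g * p) ((g * q)⁻¹)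
      (⟨(g * p)⁻¹ * u, ha⟩ : H) ((⟨(g * q)⁻¹ * v, hb⟩ : H)⁻¹)
    rw [← habs]
    congr 1
    · show g * p * ((g * p)⁻¹ * u) = u
      group
    · show ((g * q)⁻¹ * v)⁻¹ * (g * q)⁻¹ = v⁻¹
      group
  rw [← key,
    show emb g⁻¹ = e (((g, 1) : Gam G))⁻¹ by rw [emb_eq]; congr 1; simp [Prod.ext_iff],
    show emb g = e ((g, 1) : Gam G) from rfl]
  exact avgL_conj ((g, 1) : Gam G) _

end A0Aux
namespace A0Aux

variable {G : Type*} [Group G] [Fintype G] (H : Subgroup G) [DecidablePred (· ∈ H)]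

lemma Phi_mul_iota {n : ℕ} (σ : Fin n → G) (S : Finset (Fin n)) :
    Phi H σ S * iota (Gam G) (Phi H σ S)
      = (Fintype.card G : ℂ) • Tsum G
        + (2 * (S.card : ℂ) * (Fintype.card H : ℂ)) • ((rho G - 1) * Tsum G)
        + (-2 * (Fintype.card H : ℂ)) •
            ((rho G - 1) * ∑ i ∈ S, ∑ j ∈ S, cosetSum H (σ i) ((σ j)⁻¹)) := by
  rw [iota_Phi, Phi]
  set T := Tsum G with hT
  set r := rho G - 1 with hr
  set C := ∑ i ∈ S, cosetSum H (σ i) 1 with hC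
  set D := ∑ i ∈ S, cosetSum H 1 ((σ i)⁻¹) with hD
  have hTD : T * D = ((S.card : ℂ) * (Fintype.card H : ℂ)) • T := by
    rw [hD, Finset.mul_sum,
      Finset.sum_congr rfl fun i _ => Tsum_mul_cosetSum H 1 ((σ i)⁻¹),
      Finset.sum_const, ← Nat.cast_smul_eq_nsmul ℂ, smul_smul]
  have hCT : C * T = ((S.card : ℂ) * (Fintype.card H : ℂ)) • T := by
    rw [hC, Finset.sum_mul,
      Finset.sum_congr rfl fun i _ => cosetSum_mul_Tsum H (σ i) 1,
      Finset.sum_const, ← Nat.cast_smul_eq_nsmul ℂ, smul_smul]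
  have hCD : C * D = (Fintype.card H : ℂ) • ∑ i ∈ S, ∑ j ∈ S, cosetSum H (σ i) ((σ j)⁻¹) := by
    rw [hC, hD, Finset.sum_mul_sum, Finset.smul_sum]
    refine Finset.sum_congr rfl fun i _ => ?_
    rw [Finset.smul_sum]
    exact Finset.sum_congr rfl fun j _ => cosetSum_mul H (σ i) ((σ j)⁻¹)
  have hexp : (T + r * C) * (T + r * D) = T * T + T * (r * D) + (r * C) * T + (r * C) * (r * D) := by
    noncomm_ring
  have h2 : T * (r * D) = ((S.card : ℂ) * (Fintype.card H : ℂ)) • (r * T) := by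
    rw [← mul_assoc, ← r_comm T, mul_assoc, hTD, mul_smul_comm]
  have h3 : (r * C) * T = ((S.card : ℂ) * (Fintype.card H : ℂ)) • (r * T) := by
    rw [mul_assoc, hCT, mul_smul_comm]
  have h4 : (r * C) * (r * D) = (-2 * (Fintype.card H : ℂ)) •
      (r * ∑ i ∈ S, ∑ j ∈ S, cosetSum H (σ i) ((σ j)⁻¹)) := by
    have hassoc : (r * C) * (r * D) = (r * r) * (C * D) := by
      rw [mul_assoc, ← mul_assoc C r D, ← r_comm C, mul_assoc, ← mul_assoc]
    rw [hassoc, r_sq, hCD, smul_mul_assoc, mul_smul_comm, smul_smul]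
  rw [hexp, Tsum_mul_Tsum, h2, h3, h4]
  module

lemma exists_quad {n : ℕ} (hn : 2 ≤ n) (σ : Fin n → G)
    (hσ : Function.Bijective fun i : Fin n => (QuotientGroup.mk (σ i) : G ⧸ H))
    (h2t : ∀ a b c d : G ⧸ H, a ≠ b → c ≠ d → ∃ g : G, g • a = c ∧ g • b = d) :
    ∃ v0 v1 v2 : MonoidAlgebra ℂ (Gam G), ∀ S : Finset (Fin n),
      A0 H σ S = v0 + (S.card : ℂ) • v1 + ((S.card : ℂ) * (S.card : ℂ)) • v2 := by
  set i0 : Fin n := ⟨0, by omega⟩ with hi0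
  set i1 : Fin n := ⟨1, by omega⟩ with hi1
  have hmk : ∀ g x : G, (g • (QuotientGroup.mk x : G ⧸ H)) = QuotientGroup.mk (g * x) := by
    intro g x
    rw [MulAction.Quotient.smul_mk]
    rfl
  have hne01 : (QuotientGroup.mk (σ i0) : G ⧸ H) ≠ QuotientGroup.mk (σ i1) := by
    intro h
    have := hσ.injective h
    rw [hi0, hi1] at this
    exact absurd (congrArg Fin.val this) (by norm_num)
  have hexists_ne : ∀ a : G ⧸ H, ∃ b, b ≠ a := by
    intro a
    rcases eq_or_ne a (QuotientGroup.mk (σ i0)) with h | h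
    · exact ⟨QuotientGroup.mk (σ i1), by rw [h]; exact (Ne.symm hne01)⟩
    · exact ⟨QuotientGroup.mk (σ i0), Ne.symm h⟩
  have htrans : ∀ x y : G ⧸ H, ∃ g : G, g • x = y := by
    intro x y
    obtain ⟨x', hx'⟩ := hexists_ne x
    obtain ⟨y', hy'⟩ := hexists_ne y
    obtain ⟨g, hg, -⟩ := h2t x x' y y' (Ne.symm hx') (Ne.symm hy')
    exact ⟨g, hg⟩
  set Q := avgL (cosetSum H (σ i0) ((σ i0)⁻¹)) with hQdef
  set P := avgL (cosetSum H (σ i0) ((σ i1)⁻¹)) with hPdef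
  have hQ : ∀ i : Fin n, avgL (cosetSum H (σ i) ((σ i)⁻¹)) = Q := by
    intro i
    obtain ⟨g, hg⟩ := htrans (QuotientGroup.mk (σ i0)) (QuotientGroup.mk (σ i))
    rw [hmk] at hg
    exact avgL_cosetSum_conj H (σ i0) (σ i0) (σ i) (σ i) g hg hg
  have hP : ∀ i j : Fin n, i ≠ j → avgL (cosetSum H (σ i) ((σ j)⁻¹)) = P := by
    intro i j hij
    have hneij : (QuotientGroup.mk (σ i) : G ⧸ H) ≠ QuotientGroup.mk (σ j) :=
      fun h => hij (hσ.injective h)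
    obtain ⟨g, hg1, hg2⟩ := h2t (QuotientGroup.mk (σ i0)) (QuotientGroup.mk (σ i1))
      (QuotientGroup.mk (σ i)) (QuotientGroup.mk (σ j)) hne01 hneij
    rw [hmk] at hg1 hg2
    exact avgL_cosetSum_conj H (σ i0) (σ i1) (σ i) (σ j) g hg1 hg2
  have hsum : ∀ S : Finset (Fin n),
      (∑ i ∈ S, ∑ j ∈ S, avgL (cosetSum H (σ i) ((σ j)⁻¹)))
        = (S.card : ℂ) • (Q - P) + ((S.card : ℂ) * (S.card : ℂ)) • P := by
    intro S
    calc (∑ i ∈ S, ∑ j ∈ S, avgL (cosetSum H (σ i) ((σ j)⁻¹)))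
        = ∑ i ∈ S, ((Q - P) + S.card • P) := by
          refine Finset.sum_congr rfl fun i hi => ?_
          calc (∑ j ∈ S, avgL (cosetSum H (σ i) ((σ j)⁻¹)))
              = ∑ j ∈ S, ((if i = j then Q - P else 0) + P) := by
                refine Finset.sum_congr rfl fun j _ => ?_
                by_cases h : i = j
                · subst h
                  rw [hQ i, if_pos rfl, sub_add_cancel]
                · rw [hP i j h, if_neg h, zero_add]
            _ = (Q - P) + S.card • P := by
                rw [Finset.sum_add_distrib, Finset.sum_ite_eq, if_pos hi, Finset.sum_const]
      _ = S.card • ((Q - P) + S.card • P) := by rw [Finset.sum_const]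
      _ = (S.card : ℂ) • (Q - P) + ((S.card : ℂ) * (S.card : ℂ)) • P := by
          rw [← Nat.cast_smul_eq_nsmul ℂ S.card, smul_add, ← Nat.cast_smul_eq_nsmul ℂ S.card P,
            smul_smul]
  refine ⟨(2 * (Nat.card H) * n : ℂ)⁻¹ • ((Fintype.card G : ℂ) • Tsum G),
    (2 * (Nat.card H) * n : ℂ)⁻¹ •
      ((2 * (Fintype.card H : ℂ)) • ((rho G - 1) * Tsum G)
        + (-2 * (Fintype.card H : ℂ)) • ((rho G - 1) * (Q - P))),
    (2 * (Nat.card H) * n : ℂ)⁻¹ • ((-2 * (Fintype.card H : ℂ)) • ((rho G - 1) * P)), ?_⟩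
  intro S
  rw [A0_eq_avg, Afun, map_smul, Phi_mul_iota, map_add, map_add, map_smul, map_smul, map_smul,
    avgL_Tsum, avgL_r_Tsum, avgL_central_mul _ e_comm_r, map_sum]
  simp only [map_sum]
  rw [hsum S, mul_add, mul_smul_comm, mul_smul_comm]
  match_scalars <;> ring

end A0Aux
/-- under 2-transitivity of the `G`-action on `G/H`, `A⁰_{Φ_S}` is the explicit
combination `(ε(ε-1)/2)·A⁰_{Φ_{{1,2}}} - ε(ε-2)·A⁰_{Φ_{{1}}} + ((ε-1)(ε-2)/2)·A⁰_{Φ_∅}`. -/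
theorem A0_eq_of_two_transitive {G : Type*} [Group G] [Fintype G] (H : Subgroup G)
    [DecidablePred (· ∈ H)] {n : ℕ} (hn : 2 ≤ n) (σ : Fin n → G)
    (hσ : Function.Bijective fun i : Fin n => (QuotientGroup.mk (σ i) : G ⧸ H))
    (h2t : ∀ a b c d : G ⧸ H, a ≠ b → c ≠ d → ∃ g : G, g • a = c ∧ g • b = d)
    (S : Finset (Fin n)) :
    A0 H σ S
      = (((S.card : ℂ) * ((S.card : ℂ) - 1)) / 2) •
          A0 H σ ({⟨0, by omega⟩, ⟨1, by omega⟩} : Finset (Fin n))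
        - ((S.card : ℂ) * ((S.card : ℂ) - 2)) • A0 H σ ({⟨0, by omega⟩} : Finset (Fin n))
        + ((((S.card : ℂ) - 1) * ((S.card : ℂ) - 2)) / 2) • A0 H σ (∅ : Finset (Fin n)) := by
  obtain ⟨v0, v1, v2, hA⟩ := A0Aux.exists_quad H hn σ hσ h2t
  have c2 : ({⟨0, by omega⟩, ⟨1, by omega⟩} : Finset (Fin n)).card = 2 :=
    Finset.card_pair (by simp [Fin.ext_iff])
  simp only [hA, c2, Finset.card_empty, Finset.card_singleton]
  push_cast
  match_scalars <;> ring

end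
end
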